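/- Let Φ : ℝ^N → Set(ℝ^N) be a monotone set-valued map whose graph {(u, p) : p ∈ Φ(u)} is closed in ℝ^N × ℝ^N, and suppose Φ⁻¹(0) = {ξ : 0 ∈ Φ(ξ)} is nonempty. Let Q, M be real N×N matrices with M invertible such that H := Q M⁻¹ is symmetric positive definite and D := Qᵀ + Q − Mᵀ H M is symmetric positive definite. Let sequences (ξ^k), (ξ̂^k), (V^k) in ℝ^N satisfy, for every k ≥ 0, Q(ξ^k − ξ̂^k) + V^k ∈ Φ(ξ̂^k) and ξ^{k+1} = ξ^k − M(ξ^k − ξ̂^k), with Σ_{k=0}^∞ ‖V^k‖ < ∞. Then (ξ^k) converges to some ξ^∞ ∈ ℝ^N with 0 ∈ Φ(ξ^∞). -/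

import Mathlib

open Matrix

/-- Quadratic form of a matrix. -/
def qf {N : ℕ} (A : Matrix (Fin N) (Fin N) ℝ) (x : Fin N → ℝ) : ℝ := x ⬝ᵥ A.mulVec x

lemma dotSelf_nonneg {N : ℕ} (x : Fin N → ℝ) : 0 ≤ x ⬝ᵥ x :=
  Finset.sum_nonneg fun _ _ => mul_self_nonneg _

lemma dotSelf_eq_zero {N : ℕ} {x : Fin N → ℝ} (h : x ⬝ᵥ x = 0) : x = 0 := by
  funext i
  have h0 : ∀ j ∈ Finset.univ, (0:ℝ) ≤ x j * x j := fun j _ => mul_self_nonneg _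
  have := (Finset.sum_eq_zero_iff_of_nonneg h0).1 h i (Finset.mem_univ i)
  exact mul_self_eq_zero.1 this

lemma cs {N : ℕ} (x y : Fin N → ℝ) :
    x ⬝ᵥ y ≤ Real.sqrt (x ⬝ᵥ x) * Real.sqrt (y ⬝ᵥ y) := by
  have h := Finset.sum_mul_sq_le_sq_mul_sq Finset.univ x y
  have h2 : (x ⬝ᵥ y) ^ 2 ≤ (x ⬝ᵥ x) * (y ⬝ᵥ y) := by
    simpa [dotProduct, sq] using h
  calc x ⬝ᵥ y ≤ |x ⬝ᵥ y| := le_abs_self _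
    _ = Real.sqrt ((x ⬝ᵥ y) ^ 2) := (Real.sqrt_sq_eq_abs _).symm
    _ ≤ Real.sqrt ((x ⬝ᵥ x) * (y ⬝ᵥ y)) := Real.sqrt_le_sqrt h2
    _ = _ := Real.sqrt_mul (dotSelf_nonneg x) _

lemma tri {N : ℕ} (x y : Fin N → ℝ) :
    Real.sqrt ((x + y) ⬝ᵥ (x + y)) ≤ Real.sqrt (x ⬝ᵥ x) + Real.sqrt (y ⬝ᵥ y) := by
  have hxy := cs x y
  have h : (x + y) ⬝ᵥ (x + y) ≤ (Real.sqrt (x ⬝ᵥ x) + Real.sqrt (y ⬝ᵥ y)) ^ 2 := by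
    have e : (x + y) ⬝ᵥ (x + y) = x ⬝ᵥ x + 2 * (x ⬝ᵥ y) + y ⬝ᵥ y := by
      simp [add_dotProduct, dotProduct_add, dotProduct_comm y x]; ring
    rw [e]
    have h1 : Real.sqrt (x ⬝ᵥ x) ^ 2 = x ⬝ᵥ x := Real.sq_sqrt (dotSelf_nonneg x)
    have h2 : Real.sqrt (y ⬝ᵥ y) ^ 2 = y ⬝ᵥ y := Real.sq_sqrt (dotSelf_nonneg y)
    nlinarith
  calc Real.sqrt ((x+y) ⬝ᵥ (x+y)) ≤ Real.sqrt ((Real.sqrt (x ⬝ᵥ x) + Real.sqrt (y ⬝ᵥ y)) ^ 2) :=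
        Real.sqrt_le_sqrt h
    _ = _ := by rw [Real.sqrt_sq (by positivity)]

lemma norm_le_sqrt_dot {N : ℕ} (x : Fin N → ℝ) : ‖x‖ ≤ Real.sqrt (x ⬝ᵥ x) := by
  rw [pi_norm_le_iff_of_nonneg (Real.sqrt_nonneg _)]
  intro i
  rw [Real.norm_eq_abs, ← Real.sqrt_sq_eq_abs]
  apply Real.sqrt_le_sqrt
  have : x i ^ 2 ≤ ∑ j, x j * x j := by
    have := Finset.single_le_sum (f := fun j => x j * x j)
      (fun j _ => mul_self_nonneg _) (Finset.mem_univ i)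
    simpa [sq] using this
  simpa [dotProduct] using this

lemma qf_cont {N : ℕ} (A : Matrix (Fin N) (Fin N) ℝ) : Continuous (qf A) := by
  show Continuous (fun x : Fin N → ℝ => x ⬝ᵥ A.mulVec x)
  simp only [dotProduct, Matrix.mulVec]
  fun_prop

lemma qf_nonneg {N : ℕ} {A : Matrix (Fin N) (Fin N) ℝ} (hA : A.PosSemidef)
    (x : Fin N → ℝ) : 0 ≤ qf A x := by
  have := hA.dotProduct_mulVec_nonneg x
  simpa [qf] using this

lemma sym_swap {N : ℕ} {A : Matrix (Fin N) (Fin N) ℝ} (hA : A.IsHermitian)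
    (x y : Fin N → ℝ) : x ⬝ᵥ A.mulVec y = y ⬝ᵥ A.mulVec x := by
  have hAt : Aᵀ = A := by
    have := hA; rwa [Matrix.IsHermitian, Matrix.conjTranspose_eq_transpose_of_trivial] at this
  rw [Matrix.dotProduct_mulVec, ← Matrix.mulVec_transpose, hAt, dotProduct_comm]

lemma pd_bound {N : ℕ} {A : Matrix (Fin N) (Fin N) ℝ} (hA : A.PosDef) :
    ∃ c : ℝ, 0 < c ∧ ∀ x : Fin N → ℝ, x ⬝ᵥ x ≤ c * qf A x := by
  rcases Nat.eq_zero_or_pos N with h0 | hN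
  · refine ⟨1, one_pos, fun x => ?_⟩
    subst h0
    simp [dotProduct, qf]
  · set f : (Fin N → ℝ) → ℝ := fun x => qf A x with hf
    have hfc : Continuous f := qf_cont A
    have hgc : Continuous (fun x : Fin N → ℝ => x ⬝ᵥ x) := by
      simp only [dotProduct]; fun_prop
    set K : Set (Fin N → ℝ) := {x | x ⬝ᵥ x = 1} with hK
    have hKc : IsClosed K := isClosed_eq hgc continuous_const
    have hKb : K ⊆ Metric.closedBall 0 1 := by
      intro x hx
      rw [Metric.mem_closedBall, dist_zero_right]
      rw [pi_norm_le_iff_of_nonneg zero_le_one]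
      intro i
      rw [Real.norm_eq_abs, ← Real.sqrt_one, ← Real.sqrt_sq_eq_abs]
      apply Real.sqrt_le_sqrt
      have : x i ^ 2 ≤ ∑ j, x j * x j := by
        have := Finset.single_le_sum (f := fun j => x j * x j)
          (fun j _ => mul_self_nonneg _) (Finset.mem_univ i)
        simpa [sq] using this
      calc x i ^ 2 ≤ ∑ j, x j * x j := this
        _ = 1 := hx
    have hKcomp : IsCompact K :=
      (isCompact_closedBall (0 : Fin N → ℝ) 1).of_isClosed_subset hKc hKb
    have hKne : K.Nonempty := by
      refine ⟨Pi.single ⟨0, hN⟩ 1, ?_⟩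
      simp [hK, dotProduct, Pi.single_apply]
    obtain ⟨x₀, hx₀K, hx₀min⟩ := hKcomp.exists_isMinOn hKne hfc.continuousOn
    have hx₀ne : x₀ ≠ 0 := by
      intro h; rw [h] at hx₀K; simp [hK, dotProduct] at hx₀K
    have hm : 0 < f x₀ := by simpa [hf, qf] using hA.dotProduct_mulVec_pos hx₀ne
    refine ⟨(f x₀)⁻¹, inv_pos.2 hm, fun x => ?_⟩
    rcases eq_or_lt_of_le (dotSelf_nonneg x) with ht | ht
    · rw [← ht]
      have : x = 0 := dotSelf_eq_zero ht.symm
      subst this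
      simp [qf]
    · set t := x ⬝ᵥ x with hts
      set u : Fin N → ℝ := (Real.sqrt t)⁻¹ • x with hu
      have hst : Real.sqrt t ≠ 0 := (Real.sqrt_pos.2 ht).ne'
      have huu : u ⬝ᵥ u = 1 := by
        rw [hu, smul_dotProduct, dotProduct_smul, smul_smul, ← hts, smul_eq_mul]
        rw [← Real.sqrt_mul_self (le_of_lt ht)]
        field_simp
        rw [Real.sq_sqrt (Real.sqrt_nonneg _)]
      have hfu : f x = t * f u := by
        have : f u = ((Real.sqrt t)⁻¹ * (Real.sqrt t)⁻¹) * f x := by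
          simp only [hf, hu, qf, smul_dotProduct, Matrix.mulVec_smul,
            dotProduct_smul, smul_eq_mul]
          ring
        rw [this, ← Real.sqrt_mul_self (le_of_lt ht)]
        field_simp
        rw [Real.sq_sqrt (Real.sqrt_nonneg _)]
      have hmin : f x₀ ≤ f u := hx₀min huu
      rw [inv_mul_eq_div, le_div_iff₀ hm]
      calc t * f x₀ ≤ t * f u := mul_le_mul_of_nonneg_left hmin ht.le
        _ = f x := hfu.symm
        _ = qf A x := rfl

lemma key_id {N : ℕ} (Q M H D : Matrix (Fin N) (Fin N) ℝ) (hH : H.IsHermitian)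
    (hHM : H * M = Q) (hDdef : D = Qᵀ + Q - Mᵀ * Q) (r e : Fin N → ℝ) :
    qf H (r - M.mulVec e) = qf H r - 2 * ((r - e) ⬝ᵥ Q.mulVec e) - qf D e := by
  have aux : ∀ w, (M.mulVec e) ⬝ᵥ w = e ⬝ᵥ (Mᵀ.mulVec w) := fun w => by
    rw [Matrix.dotProduct_mulVec, Matrix.vecMul_transpose]
  have h1 : H.mulVec (M.mulVec e) = Q.mulVec e := by rw [Matrix.mulVec_mulVec, hHM]
  have h2 : (M.mulVec e) ⬝ᵥ (H.mulVec r) = r ⬝ᵥ (Q.mulVec e) := by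
    rw [sym_swap hH, h1]
  have h3 : (M.mulVec e) ⬝ᵥ (H.mulVec (M.mulVec e)) = e ⬝ᵥ ((Mᵀ * Q).mulVec e) := by
    rw [h1, aux, Matrix.mulVec_mulVec]
  have h4 : e ⬝ᵥ (Qᵀ.mulVec e) = e ⬝ᵥ (Q.mulVec e) := by
    rw [Matrix.mulVec_transpose, dotProduct_comm, ← Matrix.dotProduct_mulVec]
  have h5 : (M.mulVec e) ⬝ᵥ (Q.mulVec e) = e ⬝ᵥ ((Mᵀ * Q).mulVec e) := by
    rw [aux, Matrix.mulVec_mulVec]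
  simp only [qf, sub_dotProduct, dotProduct_sub, Matrix.mulVec_sub, hDdef,
    Matrix.add_mulVec, Matrix.sub_mulVec, dotProduct_add, h2, h3, h4, h5, h1]
  ring

lemma sqrt_step {x y d ε α β : ℝ} (hα : 0 < α) (hβ : 0 < β) (hε : 0 ≤ ε) (hy : 0 ≤ y)
    (hd : 0 ≤ d) (h : x ≤ y^2 - d^2 + 2*((α*y + β*d)*ε)) :
    Real.sqrt x ≤ y + (α+β)*ε := by
  have h2 : x ≤ (y + (α+β)*ε)^2 := by
    nlinarith [sq_nonneg (β*ε - d), mul_nonneg (mul_nonneg hβ.le hε) hy, sq_nonneg (α*ε),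
      mul_nonneg (mul_nonneg hα.le hβ.le) (sq_nonneg ε)]
  calc Real.sqrt x ≤ Real.sqrt ((y+(α+β)*ε)^2) := Real.sqrt_le_sqrt h2
    _ = y + (α+β)*ε := Real.sqrt_sq (by positivity)

set_option maxHeartbeats 1000000 in
/-- Convergence of the inexact prediction–correction proximal point sequence
to a zero of the maximal (closed-graph) monotone operator `Φ`. -/
theorem stmt8 {N : ℕ} (Φ : (Fin N → ℝ) → Set (Fin N → ℝ))
    (hmono : ∀ u v p q, p ∈ Φ u → q ∈ Φ v → 0 ≤ (u - v) ⬝ᵥ (p - q))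
    (hgraph : IsClosed {up : (Fin N → ℝ) × (Fin N → ℝ) | up.2 ∈ Φ up.1})
    (hzero : ∃ ξstar, (0 : Fin N → ℝ) ∈ Φ ξstar)
    (Q M : Matrix (Fin N) (Fin N) ℝ) (hM : IsUnit M.det)
    (hH : (Q * M⁻¹).PosDef)
    (hD : (Qᵀ + Q - Mᵀ * (Q * M⁻¹) * M).PosDef)
    (ξ ξhat V : ℕ → Fin N → ℝ)
    (hincl : ∀ k, Q.mulVec (ξ k - ξhat k) + V k ∈ Φ (ξhat k))
    (hiter : ∀ k, ξ (k + 1) = ξ k - M.mulVec (ξ k - ξhat k))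
    (hsum : Summable (fun k => Real.sqrt (V k ⬝ᵥ V k))) :
    ∃ ξinf : Fin N → ℝ, (0 : Fin N → ℝ) ∈ Φ ξinf ∧
      Filter.Tendsto ξ Filter.atTop (nhds ξinf) := by
  obtain ⟨ξs, hξs⟩ := hzero
  set Dm := Qᵀ + Q - Mᵀ * (Q * M⁻¹) * M with hDmdef
  set Hm := Q * M⁻¹ with hHmdef
  obtain ⟨cH, hcH, hcHx⟩ := pd_bound hH
  obtain ⟨cD, hcD, hcDx⟩ := pd_bound hD
  set α := Real.sqrt cH with hαdef
  set β := Real.sqrt cD with hβdef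
  have hα : 0 < α := by rw [hαdef]; exact Real.sqrt_pos.2 hcH
  have hβ : 0 < β := by rw [hβdef]; exact Real.sqrt_pos.2 hcD
  have hC0 : (0:ℝ) ≤ α + β := by positivity
  have hqfH0 : ∀ x, 0 ≤ qf Hm x := fun x => qf_nonneg hH.posSemidef x
  have hqfD0 : ∀ x, 0 ≤ qf Dm x := fun x => qf_nonneg hD.posSemidef x
  have hxH : ∀ x : Fin N → ℝ, Real.sqrt (x ⬝ᵥ x) ≤ α * Real.sqrt (qf Hm x) := by
    intro x
    rw [hαdef, ← Real.sqrt_mul hcH.le]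
    exact Real.sqrt_le_sqrt (hcHx x)
  have hxD : ∀ x : Fin N → ℝ, Real.sqrt (x ⬝ᵥ x) ≤ β * Real.sqrt (qf Dm x) := by
    intro x
    rw [hβdef, ← Real.sqrt_mul hcD.le]
    exact Real.sqrt_le_sqrt (hcDx x)
  have hε0 : ∀ k, (0:ℝ) ≤ Real.sqrt (V k ⬝ᵥ V k) := fun k => Real.sqrt_nonneg _
  set S := ∑' k, Real.sqrt (V k ⬝ᵥ V k) with hSdef
  have hS0 : (0:ℝ) ≤ S := by rw [hSdef]; exact tsum_nonneg hε0
  have hεS : ∀ k, Real.sqrt (V k ⬝ᵥ V k) ≤ S := by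
    intro k; rw [hSdef]; exact hsum.le_tsum k (fun j _ => hε0 j)
  have hpart : ∀ n, ∑ k ∈ Finset.range n, Real.sqrt (V k ⬝ᵥ V k) ≤ S := by
    intro n; rw [hSdef]; exact Summable.sum_le_tsum _ (fun j _ => hε0 j) hsum
  have hQMM : Hm * M = Q := by
    rw [hHmdef, Matrix.mul_assoc, Matrix.nonsing_inv_mul M hM, Matrix.mul_one]
  have hDmQ : Dm = Qᵀ + Q - Mᵀ * Q := by
    rw [hDmdef, Matrix.mul_assoc Mᵀ, hQMM]
  -- core inequality
  have step : ∀ ζ, (0:Fin N → ℝ) ∈ Φ ζ → ∀ k,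
      qf Hm (ξ (k+1) - ζ) ≤ qf Hm (ξ k - ζ) - qf Dm (ξ k - ξhat k)
        + 2 * ((ξhat k - ζ) ⬝ᵥ V k) := by
    intro ζ hζ k
    have hmon := hmono (ξhat k) ζ (Q.mulVec (ξ k - ξhat k) + V k) 0 (hincl k) hζ
    rw [sub_zero, dotProduct_add] at hmon
    have hre : ξ (k+1) - ζ = (ξ k - ζ) - M.mulVec (ξ k - ξhat k) := by rw [hiter k]; abel
    have hid := key_id Q M Hm Dm hH.1 hQMM hDmQ (ξ k - ζ) (ξ k - ξhat k)
    have hsub : (ξ k - ζ) - (ξ k - ξhat k) = ξhat k - ζ := by abel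
    rw [hsub] at hid
    rw [hre, hid]
    linarith
  -- Cauchy–Schwarz bound on the error term
  have hVle : ∀ ζ k, (ξhat k - ζ) ⬝ᵥ V k
      ≤ (α * Real.sqrt (qf Hm (ξ k - ζ)) + β * Real.sqrt (qf Dm (ξ k - ξhat k)))
          * Real.sqrt (V k ⬝ᵥ V k) := by
    intro ζ k
    have h1 := cs (ξhat k - ζ) (V k)
    have h2 : Real.sqrt ((ξhat k - ζ) ⬝ᵥ (ξhat k - ζ))
        ≤ α * Real.sqrt (qf Hm (ξ k - ζ)) + β * Real.sqrt (qf Dm (ξ k - ξhat k)) := by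
      have he : ξhat k - ζ = (ξ k - ζ) + (-(ξ k - ξhat k)) := by abel
      rw [he]
      refine (tri _ _).trans ?_
      have hneg : (-(ξ k - ξhat k)) ⬝ᵥ (-(ξ k - ξhat k))
          = (ξ k - ξhat k) ⬝ᵥ (ξ k - ξhat k) := by
        rw [neg_dotProduct, dotProduct_neg, neg_neg]
      rw [hneg]
      exact add_le_add (hxH _) (hxD _)
    exact h1.trans (mul_le_mul_of_nonneg_right h2 (hε0 k))
  -- one-step contraction in sqrt form
  have sstep : ∀ ζ, (0:Fin N → ℝ) ∈ Φ ζ → ∀ k,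
      Real.sqrt (qf Hm (ξ (k+1) - ζ))
        ≤ Real.sqrt (qf Hm (ξ k - ζ)) + (α+β) * Real.sqrt (V k ⬝ᵥ V k) := by
    intro ζ hζ k
    apply sqrt_step (d := Real.sqrt (qf Dm (ξ k - ξhat k))) hα hβ (hε0 k)
      (Real.sqrt_nonneg _) (Real.sqrt_nonneg _)
    have h1 := step ζ hζ k
    have h2 := hVle ζ k
    have e1 : Real.sqrt (qf Hm (ξ k - ζ))^2 = qf Hm (ξ k - ζ) := Real.sq_sqrt (hqfH0 _)
    have e2 : Real.sqrt (qf Dm (ξ k - ξhat k))^2 = qf Dm (ξ k - ξhat k) :=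
      Real.sq_sqrt (hqfD0 _)
    linarith
  -- uniform bound for the H-distance to ξs
  have hAk : ∀ k, Real.sqrt (qf Hm (ξ k - ξs))
      ≤ Real.sqrt (qf Hm (ξ 0 - ξs)) + (α+β) * S := by
    intro k
    have h1 : ∀ n, Real.sqrt (qf Hm (ξ n - ξs)) ≤ Real.sqrt (qf Hm (ξ 0 - ξs))
        + (α+β) * ∑ j ∈ Finset.range n, Real.sqrt (V j ⬝ᵥ V j) := by
      intro n
      induction n with
      | zero => simp
      | succ m ih =>
        have h2 := sstep ξs hξs m
        rw [Finset.sum_range_succ]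
        have : (α+β) * (∑ j ∈ Finset.range m, Real.sqrt (V j ⬝ᵥ V j)
            + Real.sqrt (V m ⬝ᵥ V m)) = (α+β) * ∑ j ∈ Finset.range m, Real.sqrt (V j ⬝ᵥ V j)
            + (α+β) * Real.sqrt (V m ⬝ᵥ V m) := by ring
        rw [this]
        linarith
    refine (h1 k).trans ?_
    have h3 := mul_le_mul_of_nonneg_left (hpart k) hC0
    linarith
  set A := Real.sqrt (qf Hm (ξ 0 - ξs)) + (α+β)*S with hAdef
  have hA0 : (0:ℝ) ≤ A := by rw [hAdef]; positivity
  -- bound on the D-norm of the errors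
  set B := Real.sqrt (2*A^2 + 4*α*S*A + 4*β^2*S^2) with hBdef
  have hB0 : (0:ℝ) ≤ B := by rw [hBdef]; positivity
  have hB : ∀ k, Real.sqrt (qf Dm (ξ k - ξhat k)) ≤ B := by
    intro k
    have hd0 : (0:ℝ) ≤ Real.sqrt (qf Dm (ξ k - ξhat k)) := Real.sqrt_nonneg _
    have ha0 : (0:ℝ) ≤ Real.sqrt (qf Hm (ξ k - ξs)) := Real.sqrt_nonneg _
    have hdsq : Real.sqrt (qf Dm (ξ k - ξhat k))^2 = qf Dm (ξ k - ξhat k) :=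
      Real.sq_sqrt (hqfD0 _)
    have hasq : Real.sqrt (qf Hm (ξ k - ξs))^2 = qf Hm (ξ k - ξs) := Real.sq_sqrt (hqfH0 _)
    have h1 := step ξs hξs k
    have h2 := hVle ξs k
    have h3 := hqfH0 (ξ (k+1) - ξs)
    have ha := hAk k
    have hq : Real.sqrt (qf Dm (ξ k - ξhat k))^2 ≤ Real.sqrt (qf Hm (ξ k - ξs))^2
        + 2*((α * Real.sqrt (qf Hm (ξ k - ξs)) + β * Real.sqrt (qf Dm (ξ k - ξhat k)))
            * Real.sqrt (V k ⬝ᵥ V k)) := by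
      rw [hdsq, hasq]; linarith
    have hd2B : Real.sqrt (qf Dm (ξ k - ξhat k))^2 ≤ 2*A^2 + 4*α*S*A + 4*β^2*S^2 := by
      nlinarith [sq_nonneg (Real.sqrt (qf Dm (ξ k - ξhat k)) - 2*β*S),
        mul_nonneg (mul_nonneg hα.le (sub_nonneg.2 ha)) (hε0 k),
        mul_nonneg (mul_nonneg hα.le hA0) (sub_nonneg.2 (hεS k)),
        mul_nonneg (mul_nonneg hβ.le hd0) (sub_nonneg.2 (hεS k)),
        sq_nonneg A, mul_nonneg hα.le (mul_nonneg hS0 hA0)]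
    calc Real.sqrt (qf Dm (ξ k - ξhat k))
        = Real.sqrt (Real.sqrt (qf Dm (ξ k - ξhat k))^2) := (Real.sqrt_sq hd0).symm
      _ ≤ Real.sqrt (2*A^2 + 4*α*S*A + 4*β^2*S^2) := Real.sqrt_le_sqrt hd2B
      _ = B := by rw [hBdef]
  -- summability of the D-norms squared
  have hsumd2 : Summable (fun k => qf Dm (ξ k - ξhat k)) := by
    apply summable_of_sum_range_le (c := qf Hm (ξ 0 - ξs) + 2*(α*A+β*B)*S)
      (fun n => hqfD0 _)
    intro n
    have hterm : ∀ k, qf Dm (ξ k - ξhat k) ≤ (qf Hm (ξ k - ξs) - qf Hm (ξ (k+1) - ξs))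
        + (2*(α*A + β*B)) * Real.sqrt (V k ⬝ᵥ V k) := by
      intro k
      have h1 := step ξs hξs k
      have h2 := hVle ξs k
      have h3 : (α * Real.sqrt (qf Hm (ξ k - ξs)) + β * Real.sqrt (qf Dm (ξ k - ξhat k)))
          * Real.sqrt (V k ⬝ᵥ V k) ≤ (α*A + β*B) * Real.sqrt (V k ⬝ᵥ V k) := by
        apply mul_le_mul_of_nonneg_right _ (hε0 k)
        exact add_le_add (mul_le_mul_of_nonneg_left (hAk k) hα.le)
          (mul_le_mul_of_nonneg_left (hB k) hβ.le)
      linarith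
    have hc : (0:ℝ) ≤ 2*(α*A+β*B) := by positivity
    calc ∑ k ∈ Finset.range n, qf Dm (ξ k - ξhat k)
        ≤ ∑ k ∈ Finset.range n, ((qf Hm (ξ k - ξs) - qf Hm (ξ (k+1) - ξs))
            + (2*(α*A + β*B)) * Real.sqrt (V k ⬝ᵥ V k)) :=
          Finset.sum_le_sum (fun k _ => hterm k)
      _ = (qf Hm (ξ 0 - ξs) - qf Hm (ξ n - ξs))
            + (2*(α*A+β*B)) * ∑ k ∈ Finset.range n, Real.sqrt (V k ⬝ᵥ V k) := by
          rw [Finset.sum_add_distrib, Finset.sum_range_sub' (fun k => qf Hm (ξ k - ξs)) n,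
            ← Finset.mul_sum]
      _ ≤ qf Hm (ξ 0 - ξs) + 2*(α*A+β*B)*S := by
          have h4 := hqfH0 (ξ n - ξs)
          have h5 := mul_le_mul_of_nonneg_left (hpart n) hc
          linarith
  have hdto0 : Filter.Tendsto (fun k => Real.sqrt (qf Dm (ξ k - ξhat k)))
      Filter.atTop (nhds 0) := by
    have h := (Real.continuous_sqrt.tendsto 0).comp hsumd2.tendsto_atTop_zero
    simpa [Function.comp_def] using h
  have heto0 : Filter.Tendsto (fun k => ξ k - ξhat k) Filter.atTop (nhds 0) := by
    rw [tendsto_zero_iff_norm_tendsto_zero]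
    apply squeeze_zero (fun k => norm_nonneg _)
      (fun k => (norm_le_sqrt_dot _).trans (hxD _))
    simpa using hdto0.const_mul β
  have hVto0 : Filter.Tendsto V Filter.atTop (nhds 0) := by
    rw [tendsto_zero_iff_norm_tendsto_zero]
    exact squeeze_zero (fun k => norm_nonneg _) (fun k => norm_le_sqrt_dot (V k))
      hsum.tendsto_atTop_zero
  -- extract a convergent subsequence
  have hmem : ∀ k, ξ k ∈ Metric.closedBall ξs (α * A) := by
    intro k
    rw [Metric.mem_closedBall, dist_eq_norm]
    calc ‖ξ k - ξs‖ ≤ Real.sqrt ((ξ k - ξs) ⬝ᵥ (ξ k - ξs)) := norm_le_sqrt_dot _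
      _ ≤ α * Real.sqrt (qf Hm (ξ k - ξs)) := hxH _
      _ ≤ α * A := mul_le_mul_of_nonneg_left (hAk k) hα.le
  obtain ⟨ξbar, -, φ, hφ, hξφ⟩ := (isCompact_closedBall ξs (α*A)).tendsto_subseq hmem
  have hφt : Filter.Tendsto φ Filter.atTop Filter.atTop := hφ.tendsto_atTop
  have hhat : Filter.Tendsto (fun j => ξhat (φ j)) Filter.atTop (nhds ξbar) := by
    have h := hξφ.sub (heto0.comp hφt)
    simp only [Function.comp, sub_zero] at h ⊢
    have he : ∀ j, ξ (φ j) - (ξ (φ j) - ξhat (φ j)) = ξhat (φ j) := fun j => by abel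
    exact h.congr he
  have hQc : Continuous (fun x : Fin N → ℝ => Q.mulVec x) :=
    LinearMap.continuous_of_finiteDimensional (Matrix.mulVecLin Q)
  have hpto0 : Filter.Tendsto (fun j => Q.mulVec (ξ (φ j) - ξhat (φ j)) + V (φ j))
      Filter.atTop (nhds 0) := by
    have h1 := (hQc.tendsto 0).comp (heto0.comp hφt)
    have h2 := hVto0.comp hφt
    have h := h1.add h2
    simp only [Function.comp, Matrix.mulVec_zero, add_zero] at h
    simpa using h
  have hbar : (0:Fin N → ℝ) ∈ Φ ξbar := by
    have := hgraph.isSeqClosed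
      (x := fun j => ((ξhat (φ j), Q.mulVec (ξ (φ j) - ξhat (φ j)) + V (φ j))
        : (Fin N → ℝ) × (Fin N → ℝ)))
      (fun j => hincl (φ j)) (hhat.prodMk_nhds hpto0)
    exact this
  -- full convergence to ξbar
  have hbφ : Filter.Tendsto (fun j => Real.sqrt (qf Hm (ξ (φ j) - ξbar)))
      Filter.atTop (nhds 0) := by
    have h1 : Filter.Tendsto (fun j => ξ (φ j) - ξbar) Filter.atTop (nhds 0) := by
      have := hξφ.sub (tendsto_const_nhds (α := ℕ) (x := ξbar))
      simp only [Function.comp, sub_self] at this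
      exact this
    have h2 := ((qf_cont Hm).tendsto 0).comp h1
    have h3 : qf Hm (0 : Fin N → ℝ) = 0 := by
      show (0 : Fin N → ℝ) ⬝ᵥ Hm.mulVec 0 = 0
      simp
    rw [h3] at h2
    have h4 := (Real.continuous_sqrt.tendsto 0).comp h2
    simpa [Function.comp_def] using h4
  have htl0 : Filter.Tendsto (fun k => ∑' n, Real.sqrt (V (n + k) ⬝ᵥ V (n + k)))
      Filter.atTop (nhds 0) := tendsto_sum_nat_add (fun i => Real.sqrt (V i ⬝ᵥ V i))
  have htlsucc : ∀ k, (∑' n, Real.sqrt (V (n + k) ⬝ᵥ V (n + k)))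
      = Real.sqrt (V k ⬝ᵥ V k) + ∑' n, Real.sqrt (V (n + (k+1)) ⬝ᵥ V (n + (k+1))) := by
    intro k
    have hs : Summable (fun n => Real.sqrt (V (n + k) ⬝ᵥ V (n + k))) :=
      (summable_nat_add_iff (f := fun i => Real.sqrt (V i ⬝ᵥ V i)) k).2 hsum
    rw [Summable.tsum_eq_zero_add hs]
    congr 1
    · simp
    · apply tsum_congr
      intro n
      rw [show n + 1 + k = n + (k+1) from by omega]
  have htlnn : ∀ k, (0:ℝ) ≤ ∑' n, Real.sqrt (V (n + k) ⬝ᵥ V (n + k)) :=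
    fun k => tsum_nonneg (fun n => Real.sqrt_nonneg _)
  set t : ℕ → ℝ := fun k => Real.sqrt (qf Hm (ξ k - ξbar))
      + (α+β) * ∑' n, Real.sqrt (V (n + k) ⬝ᵥ V (n + k)) with htdef
  have htk : ∀ k, t k = Real.sqrt (qf Hm (ξ k - ξbar))
      + (α+β) * ∑' n, Real.sqrt (V (n + k) ⬝ᵥ V (n + k)) := fun k => by rw [htdef]
  have hanti : Antitone t := by
    apply antitone_nat_of_succ_le
    intro k
    rw [htk k, htk (k+1)]
    have h1 := sstep ξbar hbar k
    have h2 := htlsucc k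
    have h3 : (α+β) * (∑' n, Real.sqrt (V (n + k) ⬝ᵥ V (n + k)))
        = (α+β) * Real.sqrt (V k ⬝ᵥ V k)
          + (α+β) * ∑' n, Real.sqrt (V (n + (k+1)) ⬝ᵥ V (n + (k+1))) := by
      rw [h2]; ring
    linarith
  have hbdd : BddBelow (Set.range t) := by
    refine ⟨0, ?_⟩
    rintro x ⟨k, rfl⟩
    rw [htk k]
    exact add_nonneg (Real.sqrt_nonneg _) (mul_nonneg hC0 (htlnn k))
  have hlim := tendsto_atTop_ciInf hanti hbdd
  have htφ0 : Filter.Tendsto (fun j => t (φ j)) Filter.atTop (nhds 0) := by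
    have h2 := (htl0.comp hφt).const_mul (α+β)
    have h := hbφ.add h2
    simp only [Function.comp, mul_zero, add_zero] at h
    have he : ∀ j, Real.sqrt (qf Hm (ξ (φ j) - ξbar))
        + (α+β) * ∑' n, Real.sqrt (V (n + φ j) ⬝ᵥ V (n + φ j)) = t (φ j) :=
      fun j => (htk (φ j)).symm
    exact h.congr he
  have hinf : (⨅ k, t k) = 0 := tendsto_nhds_unique (hlim.comp hφt) htφ0
  rw [hinf] at hlim
  have hb0 : Filter.Tendsto (fun k => Real.sqrt (qf Hm (ξ k - ξbar)))
      Filter.atTop (nhds 0) := by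
    apply squeeze_zero (fun k => Real.sqrt_nonneg _) _ hlim
    intro k
    rw [htk k]
    exact le_add_of_nonneg_right (mul_nonneg hC0 (htlnn k))
  refine ⟨ξbar, hbar, ?_⟩
  rw [← tendsto_sub_nhds_zero_iff]
  rw [tendsto_zero_iff_norm_tendsto_zero]
  apply squeeze_zero (fun k => norm_nonneg _)
    (fun k => (norm_le_sqrt_dot _).trans (hxH _))
  simpa using hb0.const_mul α
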